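/- Let ρ > 0 and let g(x) = ρ e^{−ρx} be the Exponential(ρ) density on [0,∞), so that H(x) = x + log g(x) = log ρ − (ρ−1)x. With β(λ₁,λ₂) = log ∫₀^∞ e^{λ₁ y + λ₂ H(y)} e^{−y} dy, β*(x₁,x₂) = sup_{(λ₁,λ₂) ∈ ℝ²} [λ₁x₁ + λ₂x₂ − β(λ₁,λ₂)], and G_α^{(2)}(θ) = θ · sup{ α x₂ − β*(x₁,x₂) : (x₁,x₂) ∈ ℝ², x₁ ≤ 1/θ } for θ > 0, one has, for every α > 1, sup_{θ ∈ (0,∞)} G_α^{(2)}(θ) = ρ^α − 1 − α(ρ−1). -/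

import Mathlib

open MeasureTheory

/-- The log-moment generating function `β(λ₁,λ₂) = log ∫₀^∞ e^{λ₁y + λ₂H(y)} e^{−y} dy`,
where `H : [0,∞) → ℝ ∪ {−∞}` is encoded through `eH = exp ∘ H : ℝ → [0,∞)` (so
`eH y = 0` exactly when `H(y) = −∞`; the `ℝ≥0∞`-power convention `0^{λ₂} = 0` for
`λ₂ > 0`, `= ∞` for `λ₂ < 0`, realizes the convention `e^{λ₂·(−∞)} = 0` for `λ₂ > 0`). -/
noncomputable def betaFn (eH : ℝ → ENNReal) (l : ℝ × ℝ) : EReal :=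
  ENNReal.log (∫⁻ y in Set.Ioi (0 : ℝ),
    ENNReal.ofReal (Real.exp (l.1 * y)) * eH y ^ l.2 * ENNReal.ofReal (Real.exp (-y)))

/-- The Legendre–Fenchel transform `β*(x) = sup_λ [⟨λ,x⟩ − β(λ)]`. -/
noncomputable def betaStar (eH : ℝ → ENNReal) (x : ℝ × ℝ) : EReal :=
  ⨆ l : ℝ × ℝ, ((l.1 * x.1 + l.2 * x.2 : ℝ) : EReal) - betaFn eH l

/-- `G_α^{(2)}(θ) = θ · sup{ αx₂ − β*(x) : x₁ ≤ 1/θ }`. -/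
noncomputable def G2 (eH : ℝ → ENNReal) (α θ : ℝ) : EReal :=
  ((θ : ℝ) : EReal) *
    ⨆ x : {p : ℝ × ℝ // p.1 ≤ θ⁻¹}, ((α * (x : ℝ × ℝ).2 : ℝ) : EReal) - betaStar eH x

lemma integrand_eq (ρ l1 l2 y : ℝ) (hρ : 0 < ρ) :
    ENNReal.ofReal (Real.exp (l1 * y)) * (ENNReal.ofReal (ρ * Real.exp (-(ρ-1) * y))) ^ l2
      * ENNReal.ofReal (Real.exp (-y))
    = ENNReal.ofReal (ρ ^ l2 * Real.exp (-((1 - l1 + l2 * (ρ-1)) * y))) := by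
  rw [ENNReal.ofReal_rpow_of_pos (by positivity)]
  rw [← ENNReal.ofReal_mul (by positivity), ← ENNReal.ofReal_mul (by positivity)]
  congr 1
  rw [Real.mul_rpow hρ.le (Real.exp_nonneg _), ← Real.exp_mul]
  rw [show Real.exp (l1*y) * (ρ^l2 * Real.exp (-(ρ-1)*y*l2)) * Real.exp (-y)
      = ρ^l2 * (Real.exp (l1*y) * Real.exp (-(ρ-1)*y*l2) * Real.exp (-y)) by ring]
  rw [← Real.exp_add, ← Real.exp_add]
  ring_nf

lemma lintegral_exp_decay (K c : ℝ) (hK : 0 ≤ K) (hc : 0 < c) :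
    ∫⁻ y in Set.Ioi (0:ℝ), ENNReal.ofReal (K * Real.exp (-(c * y)))
      = ENNReal.ofReal (K / c) := by
  have hint : IntegrableOn (fun y : ℝ => K * Real.exp (-(c * y))) (Set.Ioi 0) := by
    simpa [neg_mul, IntegrableOn] using (exp_neg_integrableOn_Ioi 0 hc).const_mul K
  rw [← ofReal_integral_eq_lintegral_ofReal hint
      (Filter.Eventually.of_forall fun y => by positivity)]
  congr 1
  rw [MeasureTheory.integral_const_mul]
  have := integral_comp_mul_left_Ioi (fun x => Real.exp (-x)) 0 hc
  simp only [mul_zero] at this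
  rw [this, integral_exp_neg_Ioi_zero, smul_eq_mul, mul_one]
  field_simp

lemma betaFn_exp_of_pos (ρ : ℝ) (hρ : 0 < ρ) (l : ℝ × ℝ)
    (hc : 0 < 1 - l.1 + l.2 * (ρ - 1)) :
    betaFn (fun x => ENNReal.ofReal (ρ * Real.exp (-(ρ - 1) * x))) l
      = ((l.2 * Real.log ρ - Real.log (1 - l.1 + l.2 * (ρ - 1)) : ℝ) : EReal) := by
  unfold betaFn
  simp only [integrand_eq ρ l.1 l.2 _ hρ]
  rw [lintegral_exp_decay _ _ (Real.rpow_nonneg hρ.le _) hc,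
    ENNReal.log_ofReal_of_pos (by positivity)]
  rw [Real.log_div (by positivity) hc.ne', Real.log_rpow hρ]

lemma betaFn_exp_of_nonpos (ρ : ℝ) (hρ : 0 < ρ) (l : ℝ × ℝ)
    (hc : 1 - l.1 + l.2 * (ρ - 1) ≤ 0) :
    betaFn (fun x => ENNReal.ofReal (ρ * Real.exp (-(ρ - 1) * x))) l = ⊤ := by
  unfold betaFn
  simp only [integrand_eq ρ l.1 l.2 _ hρ]
  have : ∫⁻ y in Set.Ioi (0:ℝ),
      ENNReal.ofReal (ρ ^ l.2 * Real.exp (-((1 - l.1 + l.2 * (ρ-1)) * y))) = ⊤ := by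
    have h1 : (⊤:ENNReal) = ∫⁻ _ in Set.Ioi (0:ℝ), ENNReal.ofReal (ρ ^ l.2) := by
      rw [setLIntegral_const, Real.volume_Ioi, ENNReal.mul_top]
      simp [ENNReal.ofReal_eq_zero, not_le, Real.rpow_pos_of_pos hρ]
    refine eq_top_iff.2 (h1.le.trans (setLIntegral_mono (by fun_prop) fun y hy => ?_))
    refine ENNReal.ofReal_le_ofReal ?_
    have hy' : (0:ℝ) < y := hy
    have he : (1:ℝ) ≤ Real.exp (-((1 - l.1 + l.2 * (ρ-1)) * y)) :=
      Real.one_le_exp (by nlinarith)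
    nlinarith [Real.rpow_pos_of_pos hρ l.2]
  rw [this]; rfl

lemma betaStar_exp_le (ρ : ℝ) (hρ : 0 < ρ) (x₁ : ℝ) (hx : 0 < x₁) :
    betaStar (fun x => ENNReal.ofReal (ρ * Real.exp (-(ρ - 1) * x)))
        (x₁, Real.log ρ - (ρ - 1) * x₁)
      ≤ ((x₁ - 1 - Real.log x₁ : ℝ) : EReal) := by
  refine iSup_le fun l => ?_
  rcases le_or_gt (1 - l.1 + l.2 * (ρ - 1)) 0 with hc | hc
  · rw [betaFn_exp_of_nonpos ρ hρ l hc, EReal.sub_top]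
    exact bot_le
  · rw [betaFn_exp_of_pos ρ hρ l hc, ← EReal.coe_sub, EReal.coe_le_coe_iff]
    have h := Real.log_le_sub_one_of_pos (mul_pos hc hx)
    rw [Real.log_mul hc.ne' hx.ne'] at h
    simp only
    nlinarith [h]

/-- For the Exponential(`ρ`) density `g(x) = ρe^{−ρx}`, with
`H(x) = x + log g(x) = log ρ − (ρ−1)x` (so `eH x = ρ e^{−(ρ−1)x}`), one has
`sup_{θ > 0} G_α^{(2)}(θ) = ρ^α − 1 − α(ρ−1)` for every `α > 1`. -/
theorem iSup_G2_exponential (ρ : ℝ) (hρ : 0 < ρ) (α : ℝ) (hα : 1 < α) :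
    (⨆ θ ∈ Set.Ioi (0 : ℝ),
        G2 (fun x => ENNReal.ofReal (ρ * Real.exp (-(ρ - 1) * x))) α θ)
      = ((ρ ^ α - 1 - α * (ρ - 1) : ℝ) : EReal) := by
  set eH : ℝ → ENNReal := fun x => ENNReal.ofReal (ρ * Real.exp (-(ρ - 1) * x)) with heH
  set C : ℝ := ρ ^ α - 1 - α * (ρ - 1) with hC
  have hρα : (0:ℝ) < ρ ^ α := Real.rpow_pos_of_pos hρ α
  have hbern : 1 + α * (ρ - 1) ≤ ρ ^ α := by
    have := one_add_mul_self_le_rpow_one_add (s := ρ - 1) (by linarith) (p := α) hα.le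
    simpa using this
  have hβ0 : betaFn eH (1 + α * (ρ - 1) - ρ ^ α, α) = 0 := by
    rw [heH, betaFn_exp_of_pos ρ hρ _ (by simp only; linarith)]
    simp only
    rw [show 1 - (1 + α * (ρ - 1) - ρ ^ α) + α * (ρ - 1) = ρ ^ α by ring,
      Real.log_rpow hρ, sub_self]
    rfl
  refine le_antisymm (iSup₂_le fun θ hθ => ?_) ?_
  · have hθ' : (0:ℝ) < θ := hθ
    have hinner : (⨆ x : {p : ℝ × ℝ // p.1 ≤ θ⁻¹},
        ((α * (x : ℝ × ℝ).2 : ℝ) : EReal) - betaStar eH x) ≤ ((C * θ⁻¹ : ℝ) : EReal) := by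
      refine iSup_le fun x => ?_
      have h1 : (((1 + α * (ρ - 1) - ρ ^ α) * (x : ℝ × ℝ).1 + α * (x : ℝ × ℝ).2 : ℝ) : EReal)
          ≤ betaStar eH x := by
        have := le_iSup (fun l : ℝ × ℝ =>
          ((l.1 * (x : ℝ × ℝ).1 + l.2 * (x : ℝ × ℝ).2 : ℝ) : EReal) - betaFn eH l)
          (1 + α * (ρ - 1) - ρ ^ α, α)
        simp only [hβ0, sub_zero] at this
        exact this
      calc ((α * (x : ℝ × ℝ).2 : ℝ) : EReal) - betaStar eH x
          ≤ ((α * (x : ℝ × ℝ).2 : ℝ) : EReal)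
            - (((1 + α * (ρ - 1) - ρ ^ α) * (x : ℝ × ℝ).1 + α * (x : ℝ × ℝ).2 : ℝ) : EReal) :=
            EReal.sub_le_sub le_rfl h1
        _ = ((-(1 + α * (ρ - 1) - ρ ^ α) * (x : ℝ × ℝ).1 : ℝ) : EReal) := by
            rw [← EReal.coe_sub]; norm_cast; ring
        _ ≤ ((C * θ⁻¹ : ℝ) : EReal) := by
            refine EReal.coe_le_coe_iff.2 ?_
            have hC' : C = -(1 + α * (ρ - 1) - ρ ^ α) := by rw [hC]; ring
            rw [← hC']
            exact mul_le_mul_of_nonneg_left x.prop (by rw [hC]; linarith)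
    calc G2 eH α θ ≤ ((θ : ℝ) : EReal) * ((C * θ⁻¹ : ℝ) : EReal) :=
          mul_le_mul_of_nonneg_left hinner (EReal.coe_nonneg.2 hθ'.le)
      _ = ((C : ℝ) : EReal) := by
          rw [← EReal.coe_mul]
          congr 1
          field_simp
  · refine le_trans ?_ (le_biSup _ (Set.mem_Ioi.2 hρα))
    set θ : ℝ := ρ ^ α with hθdef
    have hθ0 : (0:ℝ) < θ := hρα
    have hx₁ : (0:ℝ) < θ⁻¹ := by positivity
    set x : {p : ℝ × ℝ // p.1 ≤ θ⁻¹} :=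
      ⟨(θ⁻¹, Real.log ρ - (ρ - 1) * θ⁻¹), le_rfl⟩ with hx
    have hstar := betaStar_exp_le ρ hρ θ⁻¹ hx₁
    have hlog : Real.log θ⁻¹ = -(α * Real.log ρ) := by
      rw [Real.log_inv, Real.log_rpow hρ]
    have h2 : betaStar eH (x : ℝ × ℝ) ≤ ((θ⁻¹ - 1 - Real.log θ⁻¹ : ℝ) : EReal) := by
      simpa [hx, heH] using hstar
    have key : ((C * θ⁻¹ : ℝ) : EReal)
        ≤ ((α * (x : ℝ × ℝ).2 : ℝ) : EReal) - betaStar eH x := by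
      calc ((C * θ⁻¹ : ℝ) : EReal)
          ≤ ((α * (x : ℝ × ℝ).2 - (θ⁻¹ - 1 - Real.log θ⁻¹) : ℝ) : EReal) := by
            refine EReal.coe_le_coe_iff.2 (le_of_eq ?_)
            simp only [hx, hlog, hC, hθdef, Real.log_inv, Real.log_rpow hρ]
            field_simp
            ring
        _ = ((α * (x : ℝ × ℝ).2 : ℝ) : EReal) - ((θ⁻¹ - 1 - Real.log θ⁻¹ : ℝ) : EReal) :=
            EReal.coe_sub _ _
        _ ≤ ((α * (x : ℝ × ℝ).2 : ℝ) : EReal) - betaStar eH x :=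
            EReal.sub_le_sub le_rfl h2
    have hle : ((C * θ⁻¹ : ℝ) : EReal)
        ≤ ⨆ y : {p : ℝ × ℝ // p.1 ≤ θ⁻¹},
            ((α * (y : ℝ × ℝ).2 : ℝ) : EReal) - betaStar eH y :=
      key.trans (le_iSup (fun y : {p : ℝ × ℝ // p.1 ≤ θ⁻¹} =>
        ((α * (y : ℝ × ℝ).2 : ℝ) : EReal) - betaStar eH y) x)
    calc ((C : ℝ) : EReal) = ((θ : ℝ) : EReal) * ((C * θ⁻¹ : ℝ) : EReal) := by
          rw [← EReal.coe_mul]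
          congr 1
          field_simp
      _ ≤ G2 eH α θ := mul_le_mul_of_nonneg_left hle (EReal.coe_nonneg.2 hθ0.le)
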